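/- arXiv:2302.04336 — 2 statements merged into one kernel-verified Lean document; each statement's English description precedes it below -/
import Mathlib

section
/- For vectors v, x in ℝ^d with ‖x‖ = 1 and α ≥ 0, if v + 2αx ≠ 0 then the unique maximizer of the function x' ↦ vᵀx' - α‖x' - x‖² over the unit sphere {x' : ‖x'‖ = 1} is x* = (v + 2αx)/‖v + 2αx‖. -/
open scoped RealInnerProductSpace

theorem stmt_2 (d : ℕ) (v x : EuclideanSpace ℝ (Fin d)) (α : ℝ)
    (hx : ‖x‖ = 1) (hα : 0 ≤ α) (hne : v + (2 * α) • x ≠ 0) :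
    ‖‖v + (2 * α) • x‖⁻¹ • (v + (2 * α) • x)‖ = 1 ∧
    ∀ x' : EuclideanSpace ℝ (Fin d), ‖x'‖ = 1 →
      x' ≠ ‖v + (2 * α) • x‖⁻¹ • (v + (2 * α) • x) →
      ⟪v, x'⟫ - α * ‖x' - x‖ ^ 2 <
        ⟪v, ‖v + (2 * α) • x‖⁻¹ • (v + (2 * α) • x)⟫ -
          α * ‖‖v + (2 * α) • x‖⁻¹ • (v + (2 * α) • x) - x‖ ^ 2 := by
  set w := v + (2 * α) • x with hwdef
  have hwn : ‖w‖ ≠ 0 := norm_ne_zero_iff.mpr hne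
  have hwpos : 0 < ‖w‖ := lt_of_le_of_ne (norm_nonneg _) (Ne.symm hwn)
  have hu : ‖‖w‖⁻¹ • w‖ = 1 := by
    rw [norm_smul, norm_inv, norm_norm, inv_mul_cancel₀ hwn]
  refine ⟨hu, ?_⟩
  -- objective rewritten: for unit y, f(y) = ⟪w, y⟫ - 2α
  have key : ∀ y : EuclideanSpace ℝ (Fin d), ‖y‖ = 1 →
      ⟪v, y⟫ - α * ‖y - x‖ ^ 2 = ⟪w, y⟫ - 2 * α := by
    intro y hy
    have h1 : ‖y - x‖ ^ 2 = ‖y‖ ^ 2 - 2 * ⟪y, x⟫ + ‖x‖ ^ 2 := by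
      rw [norm_sub_sq_real]
    rw [h1, hy, hx, hwdef, inner_add_left, real_inner_smul_left,
      real_inner_comm x y]
    ring
  intro x' hx' hne'
  have hu' : ⟪w, ‖w‖⁻¹ • w⟫ = ‖w‖ := by
    rw [real_inner_smul_right, real_inner_self_eq_norm_sq]
    field_simp
  rw [key x' hx', key _ hu, hu']
  have : ⟪w, x'⟫ < ‖w‖ * ‖x'‖ := by
    rw [inner_lt_norm_mul_iff_real]
    intro h
    apply hne'
    rw [hx', one_smul] at h
    rw [h, norm_smul, hx', mul_one, Real.norm_eq_abs, abs_of_pos hwpos,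
      smul_smul, inv_mul_cancel₀ hwn, one_smul]
  rw [hx', mul_one] at this
  linarith
end

section
/- Let d ≥ 2 and let n > 1. Suppose items x₁ and x₂ have user sets U₁ = U ∪ {u₁} and U₂ = U ∪ {u₂} where U is a set of n shared users. Then there exists an assignment of unit-norm embeddings to all users such that, after each item best-responds with α = 0 to the normalized average of its users' embeddings, the diversity of the two resulting items equals 1 (i.e., they are antipodal). -/
open scoped RealInnerProductSpace

noncomputable def fmapL (d : ℕ) : ℂ →ₗ[ℝ] EuclideanSpace ℝ (Fin d) where
  toFun z := WithLp.toLp 2 (fun j : Fin d => if j.val = 0 then z.re else if j.val = 1 then z.im else 0)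
  map_add' z w := by
    ext j
    by_cases h0 : j.val = 0 <;> by_cases h1 : j.val = 1 <;>
      simp [h0, h1, Pi.add_apply, Complex.add_re, Complex.add_im]
  map_smul' r z := by
    ext j
    by_cases h0 : j.val = 0 <;> by_cases h1 : j.val = 1 <;>
      simp [h0, h1, Pi.smul_apply, Complex.smul_re, Complex.smul_im]

lemma fmapL_norm (d : ℕ) (hd : 2 ≤ d) (z : ℂ) : ‖fmapL d z‖ = ‖z‖ := by
  have h0 : (0:ℕ) < d := by omega
  have h1 : (1:ℕ) < d := by omega
  set i0 : Fin d := ⟨0, h0⟩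
  set i1 : Fin d := ⟨1, h1⟩
  have hne : i0 ≠ i1 := by simp [i0, i1, Fin.ext_iff]
  rw [EuclideanSpace.norm_eq]
  have hsum : ∑ i : Fin d, ‖fmapL d z i‖ ^ 2 = z.re ^ 2 + z.im ^ 2 := by
    rw [← Finset.sum_subset (Finset.subset_univ ({i0, i1} : Finset (Fin d)))]
    · rw [Finset.sum_pair hne]
      simp [fmapL, i0, i1, sq_abs]
    · intro x _ hx
      simp only [Finset.mem_insert, Finset.mem_singleton, not_or] at hx
      have hx0 : x.val ≠ 0 := fun h => hx.1 (by simp [i0, Fin.ext_iff, h])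
      have hx1 : x.val ≠ 1 := fun h => hx.2 (by simp [i1, Fin.ext_iff, h])
      simp [fmapL, hx0, hx1]
  rw [hsum, Complex.norm_def, Complex.normSq_apply]
  ring_nf

/-- With `n > 1` shared users and one distinguishing user per item, there exist
unit-norm user embeddings such that, after each item best-responds (with `α = 0`)
to the normalized average of its users' embeddings, the diversity of the two
resulting items equals 1. With `α = 0` the best response to the normalized
average `ṽⱼ` is exactly `ṽⱼ`. -/
theorem stmt_5 (d n : ℕ) (hd : 2 ≤ d) (hn : 1 < n) :
    ∃ (e : Fin n → EuclideanSpace ℝ (Fin d)) (u₁ u₂ : EuclideanSpace ℝ (Fin d)),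
      (∀ i, ‖e i‖ = 1) ∧ ‖u₁‖ = 1 ∧ ‖u₂‖ = 1 ∧
      ∀ v₁ v₂ : EuclideanSpace ℝ (Fin d),
        v₁ = ((n : ℝ) + 1)⁻¹ • (∑ i, e i + u₁) →
        v₂ = ((n : ℝ) + 1)⁻¹ • (∑ i, e i + u₂) →
        v₁ ≠ 0 ∧ v₂ ≠ 0 ∧
        (1 - ⟪‖v₁‖⁻¹ • v₁, ‖v₂‖⁻¹ • v₂⟫) / 2 = 1 := by
  have hn0 : (n : ℕ) ≠ 0 := by omega
  set ζ : ℂ := Complex.exp (2 * Real.pi * Complex.I / n) with hζdef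
  have hprim : IsPrimitiveRoot ζ n := Complex.isPrimitiveRoot_exp n hn0
  have hζn : ζ ^ n = 1 := hprim.pow_eq_one
  have hζ1 : ζ ≠ 1 := hprim.ne_one hn
  have hζabs : ‖ζ‖ = 1 := by
    have := Complex.norm_eq_one_of_pow_eq_one hζn hn0
    simpa using this
  refine ⟨fun i => fmapL d (ζ ^ (i : ℕ)), fmapL d 1, fmapL d (-1), ?_, ?_, ?_, ?_⟩
  · intro i
    rw [fmapL_norm d hd, norm_pow, hζabs, one_pow]
  · rw [fmapL_norm d hd]; simp
  · rw [fmapL_norm d hd]; simp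
  · intro v₁ v₂ hv₁ hv₂
    have hSum : ∑ i : Fin n, fmapL d (ζ ^ (i : ℕ)) = 0 := by
      rw [← map_sum]
      have : ∑ i : Fin n, ζ ^ (i : ℕ) = ∑ i ∈ Finset.range n, ζ ^ i :=
        Fin.sum_univ_eq_sum_range _ n
      rw [this, geom_sum_eq hζ1, hζn, sub_self, zero_div, map_zero]
    have hc : ((n : ℝ) + 1)⁻¹ ≠ 0 := by positivity
    have hu1 : fmapL d (1 : ℂ) ≠ 0 := by
      intro h
      have := fmapL_norm d hd (1 : ℂ)
      rw [h] at this; simp at this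
    have hv₁' : v₁ = ((n : ℝ) + 1)⁻¹ • fmapL d 1 := by rw [hv₁, hSum, zero_add]
    have hv₂' : v₂ = -v₁ := by
      rw [hv₂, hSum, zero_add, hv₁', ← smul_neg]
      congr 1
      rw [← map_neg]
    have hv1ne : v₁ ≠ 0 := by
      rw [hv₁']
      exact smul_ne_zero hc hu1
    refine ⟨hv1ne, by rw [hv₂']; simpa using hv1ne, ?_⟩
    rw [hv₂', norm_neg]
    rw [smul_neg, inner_neg_right, real_inner_smul_left, real_inner_smul_right,
      real_inner_self_eq_norm_sq]
    have hnorm : ‖v₁‖ ≠ 0 := norm_ne_zero_iff.mpr hv1ne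
    field_simp
    ring
end
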